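/- Let G be a temporal directed graph, S ⊆ V a set of entry vertices, DA ∈ V the target, [tα,tω] a time interval, and C ⊆ V \ (S ∪ {DA}) a temporal (S,DA)-cut within [tα,tω]; assume at least one temporal (s,DA)-path within [tα,tω] exists for some s ∈ S. Then the minimum of RT(π,C) over all temporal (s,DA)-paths π within [tα,tω] with s ∈ S equals the minimum, over all pairs (c,t) such that c ∈ C, tα ≤ t ≤ tω, and there exists a temporal path from some s ∈ S to c within [tα,tω] that arrives at c at time t and contains no vertex of C \ {c}, of the quantity ea_G(c,DA,[t,tω]) − t, where ea_G(c,DA,[t,tω]) is the earliest arrival time at DA over temporal (c,DA)-paths within [t,tω] in G (such suffix paths are allowed to pass through other vertices of C). (This establishes the correctness of Algorithm 1: the attacker's optimal attack path is found by minimizing, over first points of contact c and arrival times t, the earliest-arrival duration from c to DA.) -/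

import Mathlib

/-- A temporal `(s,d)`-path within the time interval `[tα, tω]` in a temporal directed
graph on vertex type `V` with time-indexed edge relation `E`: a sequence of pairwise
distinct vertices `v 0 = s, …, v k = d` together with strictly increasing departure
times `t 1 < ⋯ < t k` (here `t i` is the time of the edge from `v i` to `v (i+1)`),
each edge present at its departure time, all departure times `≥ tα`, and arrival
`t k + 1 ≤ tω`.  The empty path (`k = 0`) requires `s = d`. -/
structure TPath (V : Type*) (E : ℕ → V → V → Prop) (s d : V) (tα tω : ℕ) where
  k : ℕ
  v : Fin (k + 1) → V
  t : Fin k → ℕ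
  hv0 : v 0 = s
  hvk : v (Fin.last k) = d
  inj : Function.Injective v
  mono : StrictMono t
  hedge : ∀ i : Fin k, E (t i) (v i.castSucc) (v i.succ)
  hstart : ∀ i : Fin k, tα ≤ t i
  hend : ∀ i : Fin k, t i + 1 ≤ tω

namespace TPath

variable {V : Type*} {E : ℕ → V → V → Prop} {s d : V} {tα tω : ℕ}

/-- Ending (arrival) time of a temporal path: `t k + 1`; the empty path arrives at `tα`. -/
def endTime (π : TPath V E s d tα tω) : ℕ :=
  if h : 0 < π.k then π.t ⟨π.k - 1, by omega⟩ + 1 else tα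

/-- `x` is the index of the first point of contact of the path `π` with the decoy set `C`:
`π.v x ∈ C`, and `x` is the least such index. -/
def hitsAt (π : TPath V E s d tα tω) (C : Set V) (x : Fin (π.k + 1)) : Prop :=
  π.v x ∈ C ∧ ∀ j : Fin (π.k + 1), π.v j ∈ C → x ≤ j

/-- Index of the first vertex of `π` lying in `C` (`sInf ∅ = 0` if there is none). -/
noncomputable def firstContact (π : TPath V E s d tα tω) (C : Set V) : ℕ :=
  sInf {i : ℕ | ∃ h : i < π.k + 1, π.v ⟨i, h⟩ ∈ C}

/-- Response time `RT(π, C) = t k − t x` where `v x` is the first point of contact of `π`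
with `C` (entered via the edge with time `t x`); junk value `0` if `π` does not meet `C`
properly. -/
noncomputable def RT (π : TPath V E s d tα tω) (C : Set V) : ℕ :=
  if h : 0 < π.firstContact C ∧ π.firstContact C ≤ π.k ∧ 0 < π.k then
    π.t ⟨π.k - 1, by omega⟩ - π.t ⟨π.firstContact C - 1, by omega⟩
  else 0

end TPath

/-- Earliest arrival time from the source set `S` to `x` within `[tα, tω]`
(`⊤ = ∞` if unreachable; it is `tα` for `x ∈ S`, realized by the empty path). -/
noncomputable def ea {V : Type*} (E : ℕ → V → V → Prop) (S : Set V) (tα tω : ℕ)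
    (x : V) : ℕ∞ :=
  sInf {n : ℕ∞ | ∃ s ∈ S, ∃ π : TPath V E s x tα tω, n = (π.endTime : ℕ∞)}

/-- `C` is a temporal `(S,d)`-cut within `[tα, tω]`: every temporal `(s,d)`-path within
`[tα, tω]` with `s ∈ S` contains a vertex of `C`. -/
def IsTemporalCut {V : Type*} (E : ℕ → V → V → Prop) (S : Set V) (d : V) (tα tω : ℕ)
    (C : Set V) : Prop :=
  ∀ s ∈ S, ∀ π : TPath V E s d tα tω, ∃ i, π.v i ∈ C

namespace TPath

variable {V : Type*} {E : ℕ → V → V → Prop} {s d : V} {tα tω : ℕ}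

lemma v_congr (π : TPath V E s d tα tω) {a b : Fin (π.k + 1)} (h : a.1 = b.1) :
    π.v a = π.v b := congrArg π.v (Fin.ext h)

/-- Prefix of a temporal path up to index `m`. -/
def take (π : TPath V E s d tα tω) (m : ℕ) (hm : m ≤ π.k) {d' : V}
    (hd : π.v ⟨m, by omega⟩ = d') : TPath V E s d' tα tω where
  k := m
  v i := π.v ⟨i.1, by omega⟩
  t i := π.t ⟨i.1, by omega⟩
  hv0 := (π.v_congr (by simp)).trans π.hv0
  hvk := (π.v_congr (by simp)).trans hd
  inj := fun a b h => by
    have h2 := π.inj h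
    simp only [Fin.mk.injEq] at h2
    exact Fin.ext h2
  mono := fun a b hab => π.mono (show (⟨a.1, by omega⟩ : Fin π.k) < ⟨b.1, by omega⟩ from hab)
  hedge := fun i => π.hedge ⟨i.1, by omega⟩
  hstart i := π.hstart _
  hend i := π.hend _

/-- Suffix of a temporal path from index `x`, over a later interval `[tβ, tω]`. -/
def drop (π : TPath V E s d tα tω) (x : ℕ) (hx : x ≤ π.k) (tβ : ℕ)
    (ht : ∀ i : Fin π.k, x ≤ i.1 → tβ ≤ π.t i) {s' : V}
    (hs : π.v ⟨x, by omega⟩ = s') : TPath V E s' d tβ tω where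
  k := π.k - x
  v i := π.v ⟨x + i.1, by omega⟩
  t i := π.t ⟨x + i.1, by omega⟩
  hv0 := (π.v_congr (by simp)).trans hs
  hvk := (π.v_congr (by simp [Fin.last]; omega)).trans π.hvk
  inj := fun a b h => Fin.ext (by
    have h2 : x + a.1 = x + b.1 := congrArg Fin.val (π.inj h)
    omega)
  mono := fun a b hab => π.mono (show (⟨x + a.1, by omega⟩ : Fin π.k) < ⟨x + b.1, by omega⟩ by
    have hab' : a.1 < b.1 := hab
    simp only [Fin.mk_lt_mk]; omega)
  hedge := fun i => π.hedge ⟨x + i.1, by omega⟩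
  hstart i := ht ⟨x + i.1, by omega⟩ (Nat.le_add_right x i.1)
  hend i := π.hend _

/-- Concatenation of two temporal paths, assuming the times are compatible and
the vertex sets only overlap at the junction. -/
def splice {c : V} (π₁ : TPath V E s c tα tω) {tβ : ℕ} (π₂ : TPath V E c d tβ tω)
    (hβ : tα ≤ tβ)
    (htime : ∀ (i : Fin π₁.k) (j : Fin π₂.k), π₁.t i < π₂.t j)
    (hdisj : ∀ (i : Fin (π₁.k + 1)) (j : Fin (π₂.k + 1)),
      π₁.v i = π₂.v j → i.1 = π₁.k ∧ j.1 = 0) :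
    TPath V E s d tα tω where
  k := π₁.k + π₂.k
  v i := if h : i.1 ≤ π₁.k then π₁.v ⟨i.1, by omega⟩ else π₂.v ⟨i.1 - π₁.k, by omega⟩
  t i := if h : i.1 < π₁.k then π₁.t ⟨i.1, h⟩ else π₂.t ⟨i.1 - π₁.k, by omega⟩
  hv0 := by
    beta_reduce
    rw [dif_pos (by simp)]
    exact (π₁.v_congr (by simp)).trans π₁.hv0
  hvk := by
    beta_reduce
    by_cases h : π₂.k = 0
    · rw [dif_pos (by simp [Fin.last]; omega)]
      have h2 : c = d :=
        π₂.hv0.symm.trans ((π₂.v_congr (by simp [Fin.last, h])).trans π₂.hvk)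
      exact (π₁.v_congr (by simp [Fin.last, h])).trans (π₁.hvk.trans h2)
    · rw [dif_neg (by simp [Fin.last]; omega)]
      exact (π₂.v_congr (by simp only [Fin.val_last]; omega)).trans π₂.hvk
  inj := by
    intro a b hab
    beta_reduce at hab
    by_cases ha : a.1 ≤ π₁.k <;> by_cases hb : b.1 ≤ π₁.k
    · rw [dif_pos ha, dif_pos hb] at hab
      have h2 := π₁.inj hab
      simp only [Fin.mk.injEq] at h2
      exact Fin.ext h2
    · rw [dif_pos ha, dif_neg hb] at hab
      have h2 : b.1 - π₁.k = 0 := (hdisj _ _ hab).2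
      omega
    · rw [dif_neg ha, dif_pos hb] at hab
      have h2 : a.1 - π₁.k = 0 := (hdisj _ _ hab.symm).2
      omega
    · rw [dif_neg ha, dif_neg hb] at hab
      have h2 : a.1 - π₁.k = b.1 - π₁.k := congrArg Fin.val (π₂.inj hab)
      exact Fin.ext (by omega)
  mono := by
    intro a b hab
    have hab' : a.1 < b.1 := hab
    beta_reduce
    by_cases ha : a.1 < π₁.k <;> by_cases hb : b.1 < π₁.k
    · rw [dif_pos ha, dif_pos hb]
      exact π₁.mono (show (⟨a.1, ha⟩ : Fin π₁.k) < ⟨b.1, hb⟩ from hab')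
    · rw [dif_pos ha, dif_neg hb]; exact htime _ _
    · omega
    · rw [dif_neg ha, dif_neg hb]
      exact π₂.mono (show (⟨a.1 - π₁.k, by omega⟩ : Fin π₂.k) < ⟨b.1 - π₁.k, by omega⟩ by
        simp only [Fin.mk_lt_mk]; omega)
  hedge := by
    intro i
    beta_reduce
    have hcs : (i.castSucc).1 = i.1 := rfl
    have hsc : (i.succ).1 = i.1 + 1 := rfl
    by_cases h : i.1 < π₁.k
    · rw [dif_pos h, dif_pos (show (i.castSucc).1 ≤ π₁.k by omega),
        dif_pos (show (i.succ).1 ≤ π₁.k by omega)]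
      exact π₁.hedge ⟨i.1, h⟩
    · rw [dif_neg h, dif_neg (show ¬ (i.succ).1 ≤ π₁.k by omega)]
      have he : E (π₂.t ⟨i.1 - π₁.k, by omega⟩)
          (π₂.v ⟨i.1 - π₁.k, by omega⟩) (π₂.v ⟨i.1 - π₁.k + 1, by omega⟩) :=
        π₂.hedge ⟨i.1 - π₁.k, by omega⟩
      have e3 : π₂.v ⟨(i.succ).1 - π₁.k, by omega⟩ = π₂.v ⟨i.1 - π₁.k + 1, by omega⟩ :=
        π₂.v_congr (show (i.succ).1 - π₁.k = i.1 - π₁.k + 1 by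
          simp only [Fin.val_succ]; omega)
      by_cases h2 : i.1 = π₁.k
      · rw [dif_pos (show (i.castSucc).1 ≤ π₁.k by omega)]
        have e1 : π₁.v ⟨(i.castSucc).1, by omega⟩ = c :=
          (π₁.v_congr (by simp [Fin.last]; omega)).trans π₁.hvk
        have e2 : π₂.v (⟨i.1 - π₁.k, by omega⟩ : Fin (π₂.k + 1)) = c :=
          (π₂.v_congr (by simp [h2])).trans π₂.hv0
        rw [e1.trans e2.symm, e3]
        exact he
      · rw [dif_neg (show ¬ (i.castSucc).1 ≤ π₁.k by omega)]
        have e4 : π₂.v ⟨(i.castSucc).1 - π₁.k, by omega⟩ = π₂.v (⟨i.1 - π₁.k, by omega⟩ : Fin (π₂.k + 1)) :=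
          π₂.v_congr (show (i.castSucc).1 - π₁.k = i.1 - π₁.k from rfl)
        rw [e4, e3]
        exact he
  hstart := by
    intro i
    beta_reduce
    by_cases h : i.1 < π₁.k
    · rw [dif_pos h]; exact π₁.hstart _
    · rw [dif_neg h]; exact le_trans hβ (π₂.hstart _)
  hend := by
    intro i
    beta_reduce
    by_cases h : i.1 < π₁.k
    · rw [dif_pos h]; exact π₁.hend _
    · rw [dif_neg h]; exact π₂.hend _

end TPath

namespace TPath

variable {V : Type*} {E : ℕ → V → V → Prop} {s d : V} {tα tω : ℕ}

lemma t_congr (π : TPath V E s d tα tω) {a b : Fin π.k} (h : a.1 = b.1) :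
    π.t a = π.t b := congrArg π.t (Fin.ext h)

lemma splice_t_lt {c : V} (π₁ : TPath V E s c tα tω) {tβ : ℕ} (π₂ : TPath V E c d tβ tω)
    (hβ : tα ≤ tβ) (htime : ∀ (i : Fin π₁.k) (j : Fin π₂.k), π₁.t i < π₂.t j)
    (hdisj : ∀ (i : Fin (π₁.k + 1)) (j : Fin (π₂.k + 1)),
      π₁.v i = π₂.v j → i.1 = π₁.k ∧ j.1 = 0)
    (i : Fin (π₁.k + π₂.k)) (h : i.1 < π₁.k) :
    (π₁.splice π₂ hβ htime hdisj).t i = π₁.t ⟨i.1, h⟩ := by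
  show (if h : i.1 < π₁.k then π₁.t ⟨i.1, h⟩ else π₂.t ⟨i.1 - π₁.k, by omega⟩) = _
  rw [dif_pos h]

lemma splice_t_ge {c : V} (π₁ : TPath V E s c tα tω) {tβ : ℕ} (π₂ : TPath V E c d tβ tω)
    (hβ : tα ≤ tβ) (htime : ∀ (i : Fin π₁.k) (j : Fin π₂.k), π₁.t i < π₂.t j)
    (hdisj : ∀ (i : Fin (π₁.k + 1)) (j : Fin (π₂.k + 1)),
      π₁.v i = π₂.v j → i.1 = π₁.k ∧ j.1 = 0)
    (i : Fin (π₁.k + π₂.k)) (h : ¬ i.1 < π₁.k) :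
    (π₁.splice π₂ hβ htime hdisj).t i = π₂.t ⟨i.1 - π₁.k, by omega⟩ := by
  show (if h : i.1 < π₁.k then π₁.t ⟨i.1, h⟩ else π₂.t ⟨i.1 - π₁.k, by omega⟩) = _
  rw [dif_neg h]

lemma splice_v_le {c : V} (π₁ : TPath V E s c tα tω) {tβ : ℕ} (π₂ : TPath V E c d tβ tω)
    (hβ : tα ≤ tβ) (htime : ∀ (i : Fin π₁.k) (j : Fin π₂.k), π₁.t i < π₂.t j)
    (hdisj : ∀ (i : Fin (π₁.k + 1)) (j : Fin (π₂.k + 1)),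
      π₁.v i = π₂.v j → i.1 = π₁.k ∧ j.1 = 0)
    (i : Fin (π₁.k + π₂.k + 1)) (h : i.1 ≤ π₁.k) :
    (π₁.splice π₂ hβ htime hdisj).v i = π₁.v ⟨i.1, by omega⟩ := by
  show (if h : i.1 ≤ π₁.k then π₁.v ⟨i.1, by omega⟩ else π₂.v ⟨i.1 - π₁.k, by omega⟩) = _
  rw [dif_pos h]

lemma take_endTime (π : TPath V E s d tα tω) (m : ℕ) (hm : m ≤ π.k) {d' : V}
    (hd : π.v ⟨m, by omega⟩ = d') (h0 : 0 < m) :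
    (π.take m hm hd).endTime = π.t ⟨m - 1, by omega⟩ + 1 := by
  rw [endTime, dif_pos (show 0 < (π.take m hm hd).k from h0)]
  rfl

lemma drop_endTime (π : TPath V E s d tα tω) (x : ℕ) (hx : x ≤ π.k) (tβ : ℕ)
    (ht : ∀ i : Fin π.k, x ≤ i.1 → tβ ≤ π.t i) {s' : V}
    (hs : π.v ⟨x, by omega⟩ = s') (hxk : x < π.k) :
    (π.drop x hx tβ ht hs).endTime = π.t ⟨π.k - 1, by omega⟩ + 1 := by
  rw [endTime, dif_pos (show 0 < (π.drop x hx tβ ht hs).k from by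
    show 0 < π.k - x; omega)]
  show π.t ⟨x + (π.k - x - 1), by omega⟩ + 1 = _
  exact congrArg (· + 1) (π.t_congr (show x + (π.k - x - 1) = π.k - 1 by omega))

lemma splice_endTime {c : V} (π₁ : TPath V E s c tα tω) {tβ : ℕ} (π₂ : TPath V E c d tβ tω)
    (hβ : tα ≤ tβ) (htime : ∀ (i : Fin π₁.k) (j : Fin π₂.k), π₁.t i < π₂.t j)
    (hdisj : ∀ (i : Fin (π₁.k + 1)) (j : Fin (π₂.k + 1)),
      π₁.v i = π₂.v j → i.1 = π₁.k ∧ j.1 = 0) (h2 : 0 < π₂.k) :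
    (π₁.splice π₂ hβ htime hdisj).endTime = π₂.t ⟨π₂.k - 1, by omega⟩ + 1 := by
  have hk : (π₁.splice π₂ hβ htime hdisj).k = π₁.k + π₂.k := rfl
  rw [endTime, dif_pos (show 0 < (π₁.splice π₂ hβ htime hdisj).k from by
    show 0 < π₁.k + π₂.k; omega)]
  show (π₁.splice π₂ hβ htime hdisj).t ⟨π₁.k + π₂.k - 1, by omega⟩ + 1 = _
  erw [splice_t_ge π₁ π₂ hβ htime hdisj ⟨π₁.k + π₂.k - 1, by omega⟩
    (show ¬ (π₁.k + π₂.k - 1 < π₁.k) by omega)]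
  exact congrArg (· + 1) (π₂.t_congr (show π₁.k + π₂.k - 1 - π₁.k = π₂.k - 1 by omega))

end TPath

/-- correctness of Algorithm 1: for a temporal `(S,DA)`-cut
`C ⊆ V \ (S ∪ {DA})`, assuming some temporal `(s,DA)`-path with `s ∈ S` exists, the
minimum response time over all attack paths equals the minimum, over pairs `(c, t)` with
`c ∈ C`, `tα ≤ t ≤ tω` such that some temporal path from a source `s ∈ S` arrives at `c`
at time `t` while containing no vertex of `C \ {c}`, of `ea(c, DA, [t, tω]) − t`. -/
theorem optimal_attack_via_first_contacts {V : Type*} [Fintype V]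
    (E : ℕ → V → V → Prop) (S : Set V) (DA : V) (tα tω : ℕ) (C : Set V)
    (hC : C ⊆ (S ∪ {DA})ᶜ)
    (hcut : IsTemporalCut E S DA tα tω C)
    (hex : ∃ s ∈ S, Nonempty (TPath V E s DA tα tω)) :
    sInf {n : ℕ∞ | ∃ s ∈ S, ∃ π : TPath V E s DA tα tω, n = (π.RT C : ℕ∞)} =
    sInf {n : ℕ∞ | ∃ c ∈ C, ∃ t : ℕ, tα ≤ t ∧ t ≤ tω ∧
      (∃ s ∈ S, ∃ π : TPath V E s c tα tω,
        π.endTime = t ∧ ∀ i, π.v i ∈ C → π.v i = c) ∧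
      n = ea E {c} t tω DA - (t : ℕ∞)} := by
  classical
  apply le_antisymm
  · -- sInf A ≤ sInf B
    refine le_sInf ?_
    rintro n ⟨c, hc, t, htα, htω, ⟨s, hs, π₁, hend1, havoid⟩, rfl⟩
    have hcS : c ∉ S ∪ {DA} := hC hc
    have hcDA : c ≠ DA := fun h => hcS (Or.inr (by simp [h]))
    have hcnS : c ∉ S := fun h => hcS (Or.inl h)
    have hk1 : 0 < π₁.k := by
      by_contra h
      have h0 : π₁.k = 0 := by omega
      have hsc : s = c := π₁.hv0.symm.trans
        ((π₁.v_congr (by simp [Fin.last, h0])).trans π₁.hvk)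
      exact hcnS (hsc ▸ hs)
    have hb1 : π₁.k - 1 < π₁.k := by omega
    have ht1 : π₁.t ⟨π₁.k - 1, hb1⟩ + 1 = t := by
      rw [← hend1, TPath.endTime, dif_pos hk1]
    have htpos : 0 < t := by omega
    by_cases htop : ea E {c} t tω DA = ⊤
    · rw [htop, ENat.top_sub_coe]
      exact le_top
    have hTne : {m : ℕ | ∃ π₂ : TPath V E c DA t tω, m = π₂.endTime}.Nonempty := by
      by_contra hne
      rw [Set.not_nonempty_iff_eq_empty] at hne
      apply htop
      rw [ea, sInf_eq_top]
      rintro b ⟨c', hc', π₂, rfl⟩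
      have hcc : c = c' := Eq.symm hc'
      subst hcc
      exfalso
      have hmem : π₂.endTime ∈ {m : ℕ | ∃ π₂' : TPath V E c DA t tω, m = π₂'.endTime} :=
        ⟨π₂, rfl⟩
      rw [hne] at hmem
      exact hmem
    obtain ⟨π₂, hπ₂⟩ := Nat.sInf_mem hTne
    have heale : ea E {c} t tω DA ≤ (π₂.endTime : ℕ∞) := sInf_le ⟨c, rfl, π₂, rfl⟩
    have heage : ((sInf {m : ℕ | ∃ π₂ : TPath V E c DA t tω, m = π₂.endTime} : ℕ) : ℕ∞) ≤
        ea E {c} t tω DA := by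
      refine le_sInf ?_
      rintro b ⟨c', hc', π₂', rfl⟩
      have hcc : c = c' := Eq.symm hc'
      subst hcc
      have hmem2 : π₂'.endTime ∈ {m : ℕ | ∃ π₂ : TPath V E c DA t tω, m = π₂.endTime} :=
        ⟨π₂', rfl⟩
      exact_mod_cast Nat.sInf_le hmem2
    have heaeq : ea E {c} t tω DA = (π₂.endTime : ℕ∞) :=
      le_antisymm heale (by rw [← hπ₂]; exact heage)
    have hk2 : 0 < π₂.k := by
      by_contra h
      have h0 : π₂.k = 0 := by omega
      exact hcDA (π₂.hv0.symm.trans ((π₂.v_congr (by simp [Fin.last, h0])).trans π₂.hvk))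
    have hb5 : π₂.k - 1 < π₂.k := by omega
    have hm0t : π₂.t ⟨π₂.k - 1, hb5⟩ + 1 = π₂.endTime := by
      rw [TPath.endTime, dif_pos hk2]
    have htle : t ≤ π₂.t ⟨π₂.k - 1, hb5⟩ := π₂.hstart _
    -- DA does not lie on π₁
    have hDA : ∀ i : Fin (π₁.k + 1), π₁.v i ≠ DA := by
      intro i hiDA
      have hib : i.1 ≤ π₁.k := by have := i.isLt; omega
      have hi' : π₁.v ⟨i.1, by omega⟩ = DA := hiDA
      obtain ⟨j, hj⟩ := hcut s hs (π₁.take i.1 hib hi')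
      have hjk : j.1 < i.1 + 1 := j.isLt
      have hjb : j.1 < π₁.k + 1 := by omega
      have hjv : π₁.v ⟨j.1, hjb⟩ ∈ C := hj
      have hjc := havoid ⟨j.1, hjb⟩ hjv
      have hjlast : (⟨j.1, hjb⟩ : Fin (π₁.k + 1)) = Fin.last π₁.k :=
        π₁.inj (hjc.trans π₁.hvk.symm)
      have hjval : j.1 = π₁.k := by
        have h9 := congrArg Fin.val hjlast
        simpa using h9
      have hik : i.1 = π₁.k := by omega
      have hilast : π₁.v i = c :=
        (π₁.v_congr (by simp [Fin.val_last, hik])).trans π₁.hvk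
      exact hcDA (hilast.symm.trans hiDA)
    -- first contact of suffix path candidates: findGreatest
    set P : ℕ → Prop := fun j => ∃ (hj : j < π₂.k + 1) (i : Fin (π₁.k + 1)),
      π₁.v i = π₂.v ⟨j, hj⟩ with hP
    have hP0 : P 0 :=
      ⟨by omega, Fin.last π₁.k, π₁.hvk.trans ((π₂.v_congr (by simp)).trans π₂.hv0).symm⟩
    obtain ⟨j0, hj0def⟩ : ∃ j0, Nat.findGreatest P π₂.k = j0 := ⟨_, rfl⟩
    have hj0le : j0 ≤ π₂.k := hj0def ▸ Nat.findGreatest_le _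
    have hPj0 : P j0 := hj0def ▸ Nat.findGreatest_spec (Nat.zero_le _) hP0
    have hgreat : ∀ jj, j0 < jj → jj ≤ π₂.k → ¬ P jj := by
      intro jj h1 h2
      refine Nat.findGreatest_is_greatest ?_ h2
      rw [hj0def]; exact h1
    obtain ⟨hj0lt, i0, hi0⟩ := hPj0
    have hj0k : j0 < π₂.k := by
      rcases lt_or_eq_of_le hj0le with h | h
      · exact h
      · exfalso
        apply hDA i0
        rw [hi0]
        exact (π₂.v_congr (by simp [Fin.val_last, h])).trans π₂.hvk
    -- the two pieces
    have hmle : i0.1 ≤ π₁.k := by have := i0.isLt; omega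
    have hwv : π₁.v ⟨i0.1, by omega⟩ = π₂.v ⟨j0, hj0lt⟩ := hi0
    set πp := π₁.take i0.1 hmle hwv with hπpdef
    have hdvs : π₂.v ⟨j0, (by omega : j0 < π₂.k + 1)⟩ = π₂.v ⟨j0, hj0lt⟩ := π₂.v_congr rfl
    have hts : ∀ i : Fin π₂.k, j0 ≤ i.1 → t ≤ π₂.t i := fun i _ => π₂.hstart i
    set πs := π₂.drop j0 hj0le t hts hdvs with hπsdef
    have hpk : πp.k = i0.1 := rfl
    have hsk : πs.k = π₂.k - j0 := rfl
    have htime : ∀ (i : Fin πp.k) (j : Fin πs.k), πp.t i < πs.t j := by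
      intro i j
      have hik : i.1 < i0.1 := i.isLt
      have hjk : j.1 < π₂.k - j0 := j.isLt
      have hib : i.1 < π₁.k := by omega
      have hjb : j0 + j.1 < π₂.k := by omega
      have e1 : πp.t i = π₁.t ⟨i.1, hib⟩ := rfl
      have e2 : πs.t j = π₂.t ⟨j0 + j.1, hjb⟩ := rfl
      rw [e1, e2]
      have hle1 : π₁.t ⟨i.1, hib⟩ ≤ π₁.t ⟨π₁.k - 1, hb1⟩ :=
        π₁.mono.monotone (show (⟨i.1, hib⟩ : Fin π₁.k) ≤ ⟨π₁.k - 1, hb1⟩ by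
          simp only [Fin.le_def]; omega)
      have hle2 : t ≤ π₂.t ⟨j0 + j.1, hjb⟩ := π₂.hstart _
      omega
    have hdisj : ∀ (i : Fin (πp.k + 1)) (j : Fin (πs.k + 1)),
        πp.v i = πs.v j → i.1 = πp.k ∧ j.1 = 0 := by
      intro i j hij
      have hik : i.1 < i0.1 + 1 := i.isLt
      have hjk : j.1 < π₂.k - j0 + 1 := j.isLt
      have hib : i.1 < π₁.k + 1 := by omega
      have hjb : j0 + j.1 < π₂.k + 1 := by omega
      have e1 : πp.v i = π₁.v ⟨i.1, hib⟩ := rfl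
      have e2 : πs.v j = π₂.v ⟨j0 + j.1, hjb⟩ := rfl
      have hPjj : P (j0 + j.1) := ⟨hjb, ⟨i.1, hib⟩, by rw [← e1, hij, e2]⟩
      have hj1 : j.1 = 0 := by
        by_contra hne
        exact hgreat (j0 + j.1) (by omega) (by omega) hPjj
      refine ⟨?_, hj1⟩
      have hveq : π₁.v ⟨i.1, hib⟩ = π₁.v ⟨i0.1, (by omega : i0.1 < π₁.k + 1)⟩ := by
        rw [← e1, hij, e2]
        have h7 : j0 + j.1 = j0 := by omega
        exact (π₂.v_congr h7).trans hwv.symm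
      have h8 := π₁.inj hveq
      have hval : i.1 = i0.1 := by
        have h9 := congrArg Fin.val h8
        simpa using h9
      exact hval
    set ππ := πp.splice πs htα htime hdisj with hππdef
    have hπk : ππ.k = πp.k + πs.k := rfl
    refine le_trans (sInf_le ⟨s, hs, ππ, rfl⟩) ?_
    rw [heaeq, ← ENat.coe_sub, Nat.cast_le]
    by_cases hcond : 0 < ππ.firstContact C ∧ ππ.firstContact C ≤ ππ.k ∧ 0 < ππ.k
    · obtain ⟨hfc0, hfcK, hK0⟩ := hcond
      obtain ⟨x, hxdef⟩ : ∃ x, ππ.firstContact C = x := ⟨_, rfl⟩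
      have hx0 : 0 < x := by omega
      have hxK : x ≤ ππ.k := by omega
      have hb6 : ππ.k - 1 < ππ.k := by omega
      have hb7 : x - 1 < ππ.k := by omega
      have hxb : x < ππ.k + 1 := by omega
      have hRT2 : ππ.RT C = ππ.t ⟨ππ.k - 1, hb6⟩ - ππ.t ⟨x - 1, hb7⟩ := by
        rw [TPath.RT, dif_pos (⟨hfc0, hfcK, hK0⟩ :
          0 < ππ.firstContact C ∧ ππ.firstContact C ≤ ππ.k ∧ 0 < ππ.k)]
        congr 1
        have h4 : ππ.firstContact C - 1 = x - 1 := by omega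
        exact ππ.t_congr h4
      rw [hRT2]
      -- contact membership
      have hNne : {i : ℕ | ∃ h : i < ππ.k + 1, ππ.v ⟨i, h⟩ ∈ C}.Nonempty := by
        by_contra hne
        rw [Set.not_nonempty_iff_eq_empty] at hne
        have h0 : ππ.firstContact C =
            sInf {i : ℕ | ∃ h : i < ππ.k + 1, ππ.v ⟨i, h⟩ ∈ C} := rfl
        rw [hne, Nat.sInf_empty] at h0
        omega
      have hxmem : ∃ h : x < ππ.k + 1, ππ.v ⟨x, h⟩ ∈ C := by
        rw [← hxdef]; exact Nat.sInf_mem hNne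
      obtain ⟨hxb', hxcontact⟩ := hxmem
      -- value of the last time
      have hlastb : ¬ ((⟨ππ.k - 1, hb6⟩ : Fin (πp.k + πs.k)).1 < πp.k) := by
        have : (⟨ππ.k - 1, hb6⟩ : Fin (πp.k + πs.k)).1 = ππ.k - 1 := rfl
        omega
      have hlast : ππ.t ⟨ππ.k - 1, hb6⟩ = π₂.t ⟨π₂.k - 1, hb5⟩ := by
        have e6 := TPath.splice_t_ge πp πs htα htime hdisj ⟨ππ.k - 1, hb6⟩ hlastb
        erw [e6]
        show π₂.t ⟨j0 + (ππ.k - 1 - πp.k), by omega⟩ = π₂.t ⟨π₂.k - 1, hb5⟩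
        have h5 : j0 + (ππ.k - 1 - πp.k) = π₂.k - 1 := by omega
        exact π₂.t_congr h5
      rw [hlast]
      -- lower bound on the entry time
      have hcb : t - 1 ≤ ππ.t ⟨x - 1, hb7⟩ := by
        by_cases hxm : x ≤ πp.k
        · have hx2 : x < π₁.k + 1 := by omega
          have ev : ππ.v ⟨x, hxb'⟩ = π₁.v ⟨x, hx2⟩ :=
            TPath.splice_v_le πp πs htα htime hdisj ⟨x, hxb'⟩ hxm
          have hvc : π₁.v ⟨x, hx2⟩ = c := havoid _ (ev ▸ hxcontact)
          have hxlast : (⟨x, hx2⟩ : Fin (π₁.k + 1)) = Fin.last π₁.k :=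
            π₁.inj (hvc.trans π₁.hvk.symm)
          have hxval : x = π₁.k := by
            have h9 := congrArg Fin.val hxlast
            simpa using h9
          have h10 : (⟨x - 1, hb7⟩ : Fin (πp.k + πs.k)).1 < πp.k := by
            have : (⟨x - 1, hb7⟩ : Fin (πp.k + πs.k)).1 = x - 1 := rfl
            omega
          have h11 : x - 1 < π₁.k := by omega
          have e8 : ππ.t ⟨x - 1, hb7⟩ = π₁.t ⟨x - 1, h11⟩ :=
            TPath.splice_t_lt πp πs htα htime hdisj ⟨x - 1, hb7⟩ h10
          rw [e8]
          have h12 : x - 1 = π₁.k - 1 := by omega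
          have e9 : π₁.t ⟨x - 1, h11⟩ = π₁.t ⟨π₁.k - 1, hb1⟩ := π₁.t_congr h12
          omega
        · have h10 : ¬ ((⟨x - 1, hb7⟩ : Fin (πp.k + πs.k)).1 < πp.k) := by
            have : (⟨x - 1, hb7⟩ : Fin (πp.k + πs.k)).1 = x - 1 := rfl
            omega
          have e8 := TPath.splice_t_ge πp πs htα htime hdisj ⟨x - 1, hb7⟩ h10
          erw [e8]
          have h15 : x - 1 - πp.k < πs.k := by omega
          have h14 : t ≤ πs.t ⟨x - 1 - πp.k, h15⟩ := πs.hstart _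
          have e10 : πs.t ⟨(⟨x - 1, hb7⟩ : Fin (πp.k + πs.k)).1 - πp.k, by omega⟩ =
              πs.t ⟨x - 1 - πp.k, h15⟩ := πs.t_congr rfl
          rw [e10]
          omega
      omega
    · have h0 : ππ.RT C = 0 := by rw [TPath.RT, dif_neg hcond]
      rw [h0]
      exact Nat.zero_le _
  · -- sInf B ≤ sInf A
    refine le_sInf ?_
    rintro n ⟨s, hs, π, rfl⟩
    obtain ⟨i0, hi0⟩ := hcut s hs π
    have hNne : {i : ℕ | ∃ h : i < π.k + 1, π.v ⟨i, h⟩ ∈ C}.Nonempty :=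
      ⟨i0.1, i0.2, hi0⟩
    obtain ⟨x, hxdef⟩ : ∃ x, π.firstContact C = x := ⟨_, rfl⟩
    have hxmem : ∃ h : x < π.k + 1, π.v ⟨x, h⟩ ∈ C := by
      rw [← hxdef]; exact Nat.sInf_mem hNne
    obtain ⟨hxlt, hxC⟩ := hxmem
    have hmin : ∀ j (hj : j < π.k + 1), π.v ⟨j, hj⟩ ∈ C → x ≤ j := by
      intro j hj hjC
      rw [← hxdef]
      exact Nat.sInf_le ⟨hj, hjC⟩
    have hx0 : 0 < x := by
      rcases Nat.eq_zero_or_pos x with h | h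
      · exfalso
        have h1 : π.v ⟨x, hxlt⟩ = s := (π.v_congr (by simp [h])).trans π.hv0
        exact hC (h1 ▸ hxC) (Or.inl hs)
      · exact h
    have hxk : x < π.k := by
      rcases lt_or_ge x π.k with h | h
      · exact h
      · exfalso
        have hxeq : x = π.k := by omega
        have h1 : π.v ⟨x, hxlt⟩ = DA :=
          (π.v_congr (by simp [Fin.last, hxeq])).trans π.hvk
        exact hC (h1 ▸ hxC) (Or.inr rfl)
    have hkpos : 0 < π.k := by omega
    have hb1 : x - 1 < π.k := by omega
    have hb2 : π.k - 1 < π.k := by omega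
    have hb3 : x ≤ π.k := by omega
    have hb4 : x < π.k + 1 := by omega
    have hprefc : π.v ⟨x, hb4⟩ = π.v ⟨x, hxlt⟩ := π.v_congr rfl
    have hpend : (π.take x hb3 hprefc).endTime = π.t ⟨x - 1, hb1⟩ + 1 :=
      π.take_endTime x hb3 hprefc hx0
    have hpavoid : ∀ i, (π.take x hb3 hprefc).v i ∈ C → (π.take x hb3 hprefc).v i = π.v ⟨x, hxlt⟩ := by
      intro i hiC
      have hilt : i.1 < x + 1 := i.isLt
      have hib : i.1 < π.k + 1 := by omega
      have hiv : (π.take x hb3 hprefc).v i = π.v ⟨i.1, hib⟩ := rfl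
      rw [hiv] at hiC ⊢
      have hle : x ≤ i.1 := hmin i.1 _ hiC
      have hh : i.1 = x := by omega
      exact π.v_congr hh
    have htmono : ∀ i : Fin π.k, x ≤ i.1 → π.t ⟨x - 1, hb1⟩ + 1 ≤ π.t i := by
      intro i hxi
      have hlt : π.t ⟨x - 1, hb1⟩ < π.t i :=
        π.mono (show (⟨x - 1, hb1⟩ : Fin π.k) < i by
          simp only [Fin.lt_def]; omega)
      omega
    have hsend : (π.drop x hb3 (π.t ⟨x - 1, hb1⟩ + 1) htmono hprefc).endTime
        = π.t ⟨π.k - 1, hb2⟩ + 1 :=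
      π.drop_endTime x hb3 (π.t ⟨x - 1, hb1⟩ + 1) htmono hprefc hxk
    have hea : ea E {π.v ⟨x, hxlt⟩} (π.t ⟨x - 1, hb1⟩ + 1) tω DA ≤
        ((π.t ⟨π.k - 1, hb2⟩ + 1 : ℕ) : ℕ∞) :=
      sInf_le ⟨π.v ⟨x, hxlt⟩, rfl, π.drop x hb3 (π.t ⟨x - 1, hb1⟩ + 1) htmono hprefc,
        by rw [hsend]⟩
    have hRT : π.RT C = π.t ⟨π.k - 1, hb2⟩ - π.t ⟨x - 1, hb1⟩ := by
      rw [TPath.RT, dif_pos (show 0 < π.firstContact C ∧ π.firstContact C ≤ π.k ∧ 0 < π.k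
        from by rw [hxdef]; exact ⟨hx0, by omega, hkpos⟩)]
      congr 1
      have h4 : π.firstContact C - 1 = x - 1 := by omega
      exact π.t_congr h4
    refine le_trans (sInf_le ⟨π.v ⟨x, hxlt⟩, hxC, π.t ⟨x - 1, hb1⟩ + 1, ?_, ?_,
      ⟨s, hs, π.take x hb3 hprefc, hpend, hpavoid⟩, rfl⟩) ?_
    · have := π.hstart ⟨x - 1, hb1⟩; omega
    · exact π.hend ⟨x - 1, hb1⟩
    · refine le_trans (tsub_le_tsub_right hea _) ?_
      rw [← ENat.coe_sub, Nat.cast_le, hRT]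
      have hmle : π.t ⟨x - 1, hb1⟩ ≤ π.t ⟨π.k - 1, hb2⟩ :=
        π.mono.monotone (show (⟨x - 1, hb1⟩ : Fin π.k) ≤ ⟨π.k - 1, hb2⟩ by
          simp only [Fin.le_def]; omega)
      omega
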